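/- For nonnegative integers n, k, s with s ≤ k ≤ ⌊(n-1)/2⌋, we have ∑_{j=0}^{s} C(s+k-2j, s-j) · C(n-1-s-k+2j, j) = ∑_{l=0}^{s} C(n, l). -/

import Mathlib

open Finset Nat

lemma conv_assoc (a b c : ℕ → ℕ) (n : ℕ) :
    ∑ i ∈ range (n+1), a i * ∑ j ∈ range (n-i+1), b j * c (n-i-j)
      = ∑ m ∈ range (n+1), (∑ i ∈ range (m+1), a i * b (m-i)) * c (n-m) := by
  have h := congrArg (PowerSeries.coeff (R := ℕ) n)
    (mul_assoc (PowerSeries.mk a) (PowerSeries.mk b) (PowerSeries.mk c))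
  simpa [PowerSeries.coeff_mul, Finset.Nat.sum_antidiagonal_eq_sum_range_succ_mk,
    PowerSeries.coeff_mk] using h.symm

lemma ident (m : ℕ) : 4 * centralBinom m = centralBinom (m+1) + 2 * catalan m := by
  have h1 := Nat.succ_mul_centralBinom_succ m
  have h2 := succ_mul_catalan_eq_centralBinom m
  have key : (m+1) * (4 * centralBinom m) = (m+1) * (centralBinom (m+1) + 2 * catalan m) := by
    zify at h1 h2 ⊢
    linear_combination -h1 - 2 * h2
  exact Nat.eq_of_mul_eq_mul_left (Nat.succ_pos m) key

lemma L1 : ∀ n : ℕ, 2 * ∑ i ∈ range (n+1), centralBinom i * catalan (n - i) = centralBinom (n+1) := by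
  intro n
  induction n using Nat.strong_induction_on with
  | _ n ih =>
    match n with
    | 0 => simp [centralBinom]
    | Nat.succ n =>
      show 2 * ∑ i ∈ range (n+2), centralBinom i * catalan (n+1-i) = centralBinom (n+2)
      have claim1 : ∑ i ∈ range (n+2), centralBinom i * catalan (n+1-i)
          = catalan (n+1) + ∑ m ∈ range (n+1), centralBinom (m+1) * catalan (n-m) := by
        rw [Finset.sum_range_succ']
        have e : ∀ i ∈ range (n+1), centralBinom (i+1) * catalan (n+1-(i+1))
            = centralBinom (i+1) * catalan (n-i) := by
          intro i _; congr 2; omega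
        rw [Finset.sum_congr rfl e]
        simp [Nat.centralBinom_zero]
        omega
      have claim2 : 2 * ∑ i ∈ range (n+2), centralBinom i * catalan (n+1-i)
          = 2 * centralBinom (n+1) + ∑ m ∈ range (n+1), centralBinom (m+1) * catalan (n-m) := by
        rw [Finset.sum_range_succ]
        have e1 : ∀ i ∈ range (n+1), centralBinom i * catalan (n+1-i)
            = centralBinom i * ∑ j ∈ range (n-i+1), catalan j * catalan (n-i-j) := by
          intro i hi
          simp only [Finset.mem_range] at hi
          have h : n+1-i = (n-i)+1 := by omega
          rw [h, catalan_succ', Finset.Nat.sum_antidiagonal_eq_sum_range_succ_mk]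
        rw [Finset.sum_congr rfl e1, conv_assoc centralBinom catalan catalan n]
        have h0 : n+1-(n+1) = 0 := by omega
        rw [h0, catalan_zero, mul_one, Nat.mul_add, Finset.mul_sum]
        have e2 : ∀ m ∈ range (n+1),
            2 * ((∑ i ∈ range (m+1), centralBinom i * catalan (m-i)) * catalan (n-m))
              = centralBinom (m+1) * catalan (n-m) := by
          intro m hm
          simp only [Finset.mem_range] at hm
          rw [← mul_assoc, ih m (by omega)]
        rw [Finset.sum_congr rfl e2]
        omega
      have hid : 4 * centralBinom (n+1) = centralBinom (n+2) + 2 * catalan (n+1) := ident (n+1)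
      omega

lemma conv : ∀ n : ℕ, ∑ j ∈ range (n+1), centralBinom j * centralBinom (n-j) = 4^n := by
  intro n
  induction n with
  | zero => simp [centralBinom]
  | succ n ih =>
    show ∑ j ∈ range (n+2), centralBinom j * centralBinom (n+1-j) = 4^(n+1)
    have key : ∑ j ∈ range (n+2), centralBinom j * centralBinom (n+1-j)
          + 2 * ∑ i ∈ range (n+1), centralBinom i * catalan (n-i)
        = 4 * ∑ j ∈ range (n+1), centralBinom j * centralBinom (n-j) + centralBinom (n+1) := by
      rw [Finset.sum_range_succ, Finset.mul_sum, Finset.mul_sum, add_right_comm,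
        ← Finset.sum_add_distrib]
      have e : ∀ j ∈ range (n+1),
          centralBinom j * centralBinom (n+1-j) + 2 * (centralBinom j * catalan (n-j))
            = 4 * (centralBinom j * centralBinom (n-j)) := by
        intro j hj
        simp only [Finset.mem_range] at hj
        have h1 : n+1-j = (n-j)+1 := by omega
        rw [h1]
        calc centralBinom j * centralBinom ((n-j)+1) + 2 * (centralBinom j * catalan (n-j))
            = centralBinom j * (centralBinom ((n-j)+1) + 2 * catalan (n-j)) := by ring
          _ = centralBinom j * (4 * centralBinom (n-j)) := by rw [← ident (n-j)]
          _ = 4 * (centralBinom j * centralBinom (n-j)) := by ring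
      rw [Finset.sum_congr rfl e]
      have h0 : n+1-(n+1) = 0 := by omega
      rw [h0]
      simp [Nat.centralBinom_zero]
    have hL1 := L1 n
    have h4 : 4 ^ (n+1) = 4 * 4 ^ n := by ring
    omega

lemma conv' (s : ℕ) : ∑ j ∈ range (s+1), (2*s - 2*j).choose (s-j) * (2*j).choose j = 4^s := by
  have e : ∀ j ∈ range (s+1), (2*s - 2*j).choose (s-j) * (2*j).choose j
      = centralBinom j * centralBinom (s-j) := by
    intro j hj
    simp only [Finset.mem_range] at hj
    have h : 2*s - 2*j = 2*(s-j) := by omega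
    rw [h, centralBinom, centralBinom]
    ring
  rw [Finset.sum_congr rfl e, conv]

open Finset Nat

-- Pascal recurrence for the RHS partial sums
lemma recR (N s : ℕ) : ∑ l ∈ range (s+2), (N+1).choose l
    = ∑ l ∈ range (s+2), N.choose l + ∑ l ∈ range (s+1), N.choose l := by
  rw [Finset.sum_range_succ' (fun l => (N+1).choose l) (s+1)]
  have e : ∀ i ∈ range (s+1), (N+1).choose (i+1) = N.choose i + N.choose (i+1) := by
    intro i _; rw [Nat.choose_succ_succ]
  rw [Finset.sum_congr rfl e, Finset.sum_add_distrib]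
  rw [Finset.sum_range_succ' (fun l => N.choose l) (s+1)]
  simp
  omega

-- Pascal recurrence (A): on the second factor
lemma recA (s t u : ℕ) :
    ∑ j ∈ range (s+2), (2*(s+1)+t - 2*j).choose (s+1-j) * ((u+1) + 2*j).choose j
      = ∑ j ∈ range (s+2), (2*(s+1)+t - 2*j).choose (s+1-j) * (u + 2*j).choose j
        + ∑ j ∈ range (s+1), (2*s+t - 2*j).choose (s-j) * ((u+2) + 2*j).choose j := by
  rw [Finset.sum_range_succ' (fun j => (2*(s+1)+t - 2*j).choose (s+1-j) * ((u+1) + 2*j).choose j) (s+1)]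
  rw [Finset.sum_range_succ' (fun j => (2*(s+1)+t - 2*j).choose (s+1-j) * (u + 2*j).choose j) (s+1)]
  have e : ∀ i ∈ range (s+1),
      (2*(s+1)+t - 2*(i+1)).choose (s+1-(i+1)) * ((u+1) + 2*(i+1)).choose (i+1)
        = (2*s+t - 2*i).choose (s-i) * ((u+2) + 2*i).choose i
          + (2*(s+1)+t - 2*(i+1)).choose (s+1-(i+1)) * (u + 2*(i+1)).choose (i+1) := by
    intro i hi
    simp only [Finset.mem_range] at hi
    have h1 : 2*(s+1)+t - 2*(i+1) = 2*s+t - 2*i := by omega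
    have h2 : s+1-(i+1) = s-i := by omega
    have h3 : (u+1) + 2*(i+1) = ((u+2) + 2*i) + 1 := by omega
    have h4 : u + 2*(i+1) = (u+2) + 2*i := by omega
    rw [h1, h2, h3, h4, Nat.choose_succ_succ]
    ring
  rw [Finset.sum_congr rfl e, Finset.sum_add_distrib]
  have h0 : (2*(s+1)+t - 2*0).choose (s+1-0) * ((u+1) + 2*0).choose 0
      = (2*(s+1)+t - 2*0).choose (s+1-0) * (u + 2*0).choose 0 := by
    simp
  omega

-- Pascal recurrence (B): on the first factor (at u = 0)
lemma recB (s t : ℕ) :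
    ∑ j ∈ range (s+2), (2*(s+1)+(t+1) - 2*j).choose (s+1-j) * (0 + 2*j).choose j
      = ∑ j ∈ range (s+2), (2*(s+1)+t - 2*j).choose (s+1-j) * (0 + 2*j).choose j
        + ∑ j ∈ range (s+1), (2*s+(t+2) - 2*j).choose (s-j) * (0 + 2*j).choose j := by
  rw [Finset.sum_range_succ (fun j => (2*(s+1)+(t+1) - 2*j).choose (s+1-j) * (0 + 2*j).choose j) (s+1)]
  rw [Finset.sum_range_succ (fun j => (2*(s+1)+t - 2*j).choose (s+1-j) * (0 + 2*j).choose j) (s+1)]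
  have e : ∀ j ∈ range (s+1),
      (2*(s+1)+(t+1) - 2*j).choose (s+1-j) * (0 + 2*j).choose j
        = (2*(s+1)+t - 2*j).choose (s+1-j) * (0 + 2*j).choose j
          + (2*s+(t+2) - 2*j).choose (s-j) * (0 + 2*j).choose j := by
    intro j hj
    simp only [Finset.mem_range] at hj
    have h1 : 2*(s+1)+(t+1) - 2*j = (2*s+(t+2) - 2*j) + 1 := by omega
    have h2 : s+1-j = (s-j)+1 := by omega
    have h3 : 2*(s+1)+t - 2*j = 2*s+(t+2) - 2*j := by omega
    rw [h1, h2, h3, Nat.choose_succ_succ]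
    ring
  rw [Finset.sum_congr rfl e, Finset.sum_add_distrib]
  have hl : (2*(s+1)+(t+1) - 2*(s+1)).choose (s+1-(s+1)) = 1 := by
    have : s+1-(s+1) = 0 := by omega
    rw [this, Nat.choose_zero_right]
  have hl' : (2*(s+1)+t - 2*(s+1)).choose (s+1-(s+1)) = 1 := by
    have : s+1-(s+1) = 0 := by omega
    rw [this, Nat.choose_zero_right]
  simp only [hl, hl', one_mul]
  omega

open Finset Nat

lemma keyF (s : ℕ) : ∀ t u : ℕ,
    ∑ j ∈ range (s+1), (2*s+t - 2*j).choose (s-j) * (u + 2*j).choose j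
      = ∑ l ∈ range (s+1), (2*s+t+u+1).choose l := by
  induction s with
  | zero => intro t u; simp
  | succ s ih =>
    simp only [show s+1+1 = s+2 from rfl]
    have hu0 : ∀ t, ∑ j ∈ range (s+2), (2*(s+1)+t - 2*j).choose (s+1-j) * (0 + 2*j).choose j
        = ∑ l ∈ range (s+2), (2*(s+1)+t+0+1).choose l := by
      intro t
      induction t with
      | zero =>
        have eL : ∀ j ∈ range (s+2), (2*(s+1)+0 - 2*j).choose (s+1-j) * (0 + 2*j).choose j
            = (2*(s+1) - 2*j).choose (s+1-j) * (2*j).choose j := by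
          intro j hj
          have h1 : 2*(s+1)+0 - 2*j = 2*(s+1) - 2*j := by omega
          have h2 : 0 + 2*j = 2*j := by omega
          rw [h1, h2]
        have eR : ∀ l ∈ range (s+2), (2*(s+1)+0+0+1).choose l = (2*(s+1)+1).choose l := by
          intro l _
          have h : 2*(s+1)+0+0+1 = 2*(s+1)+1 := by omega
          rw [h]
        rw [Finset.sum_congr rfl eL, Finset.sum_congr rfl eR]
        rw [show (s+2) = (s+1)+1 from rfl]
        rw [conv' (s+1), Nat.sum_range_choose_halfway (s+1)]
      | succ t iht =>
        rw [recB s t, iht, ih (t+2) 0]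
        have hN1 : 2*(s+1)+(t+1)+0+1 = (2*(s+1)+t+0+1)+1 := by omega
        have hN2 : 2*s+(t+2)+0+1 = 2*(s+1)+t+0+1 := by omega
        rw [hN1, hN2, recR (2*(s+1)+t+0+1) s]
    intro t u
    induction u with
    | zero => exact hu0 t
    | succ u ihu =>
      rw [recA s t u, ihu, ih t (u+2)]
      have hN1 : 2*(s+1)+t+(u+1)+1 = (2*(s+1)+t+u+1)+1 := by omega
      have hN2 : 2*s+t+(u+2)+1 = 2*(s+1)+t+u+1 := by omega
      rw [hN1, hN2, recR (2*(s+1)+t+u+1) s]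

theorem stmt0 (n k s : ℕ) (h1 : s ≤ k) (h2 : k ≤ (n - 1) / 2) :
    ∑ j ∈ Finset.range (s + 1),
        (s + k - 2 * j).choose (s - j) * (n - 1 - s - k + 2 * j).choose j
      = ∑ l ∈ Finset.range (s + 1), n.choose l := by
  rcases n with _ | m
  · have hk : k = 0 := by omega
    have hs : s = 0 := by omega
    subst hk; subst hs
    simp
  · have h2' : 2 * k ≤ m := by omega
    set t := k - s with ht
    set u := m - s - k with hu
    have eL : ∀ j ∈ range (s+1),
        (s + k - 2 * j).choose (s - j) * (m + 1 - 1 - s - k + 2 * j).choose j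
          = (2*s+t - 2*j).choose (s-j) * (u + 2*j).choose j := by
      intro j hj
      simp only [Finset.mem_range] at hj
      have e1 : s + k - 2*j = 2*s+t - 2*j := by omega
      have e2 : m + 1 - 1 - s - k + 2*j = u + 2*j := by omega
      rw [e1, e2]
    have eR : ∀ l ∈ range (s+1), (m+1).choose l = (2*s+t+u+1).choose l := by
      intro l _
      have h : m+1 = 2*s+t+u+1 := by omega
      rw [h]
    rw [Finset.sum_congr rfl eL, Finset.sum_congr rfl eR]
    exact keyF s t u
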